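/- In the rank-1 case, for every environment e, every β ∈ {1,…,m}, every α ∈ {1,…,m}, every ℓ ∈ ℤ and every i ≠ ℓ, the conditional law of the regime at the hitting time satisfies: P^e_{αi}(G_{τ_ℓ} = β | τ_ℓ < ∞) = π_β · q_{ℓ+1}^{(β)}(e)/q_{ℓ+1}(e) whenever i > ℓ, and P^e_{αi}(G_{τ_ℓ} = β | τ_ℓ < ∞) = π_β · p_{ℓ−1}^{(β)}(e)/p_{ℓ−1}(e) whenever i < ℓ. -/

import Mathlib

open MeasureTheory Filter Matrix
open scoped ENNReal Topology

namespace Parrondo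

/-- One-step transition probability of the regime-switching random walk:
`P_{αi,βj} = Q_{αβ} P^{(β)}_{ij}` with `P^{(β)}_{i,i+1} = p^{(β)}_i`,
`P^{(β)}_{i,i-1} = 1 - p^{(β)}_i`. -/
noncomputable def step {ι : Type*} (Q : Matrix ι ι ℝ) (p : ι → ℤ → ℝ) (s s' : ι × ℤ) : ℝ :=
  Q s.1 s'.1 *
    (if s'.2 = s.2 + 1 then p s'.1 s.2
     else if s'.2 = s.2 - 1 then 1 - p s'.1 s.2 else 0)

/-- `μ α i` is the quenched law of the regime-switching walk `(G_n, X_n)` started at `(α, i)`,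
characterized by its values on cylinder sets. -/
def IsQuenchedLaw {ι : Type*} [DecidableEq ι] [MeasurableSpace ι]
    (Q : Matrix ι ι ℝ) (p : ι → ℤ → ℝ) (μ : ι → ℤ → Measure (ℕ → ι × ℤ)) : Prop :=
  ∀ (α : ι) (i : ℤ),
    IsProbabilityMeasure (μ α i) ∧
    ∀ (n : ℕ) (traj : ℕ → ι × ℤ),
      μ α i {ω | ∀ k ≤ n, ω k = traj k} =
        (if traj 0 = (α, i) then 1 else 0) *
          ENNReal.ofReal (∏ k ∈ Finset.range n, step Q p (traj k) (traj (k + 1)))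

/-- The event `{τ_ℓ < ∞}` where `τ_ℓ = inf {n ≥ 1 : X_n = ℓ}`. -/
def hitEvent {ι : Type*} (ℓ : ℤ) : Set (ℕ → ι × ℤ) := {ω | ∃ n : ℕ, 1 ≤ n ∧ (ω n).2 = ℓ}

/-- The event `{τ_ℓ < ∞, G_{τ_ℓ} = β}`. -/
def hitRegimeEvent {ι : Type*} (ℓ : ℤ) (β : ι) : Set (ℕ → ι × ℤ) :=
  {ω | ∃ n : ℕ, 1 ≤ n ∧ (ω n).2 = ℓ ∧ (ω n).1 = β ∧ ∀ k, 1 ≤ k → k < n → (ω k).2 ≠ ℓ}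

/-- The event `{X_n ≤ ℓ infinitely often}`. -/
def belowIO {ι : Type*} (ℓ : ℤ) : Set (ℕ → ι × ℤ) := {ω | ∃ᶠ n in atTop, (ω n).2 ≤ ℓ}

/-- The event `{lim_n X_n = +∞}`. -/
def driftTop {ι : Type*} : Set (ℕ → ι × ℤ) := {ω | Tendsto (fun n => (ω n).2) atTop atTop}

/-- The event `{lim_n X_n = -∞}`. -/
def driftBot {ι : Type*} : Set (ℕ → ι × ℤ) := {ω | Tendsto (fun n => (ω n).2) atTop atBot}

/-- The event `{liminf_n X_n = -∞ and limsup_n X_n = +∞}`. -/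
def oscillate {ι : Type*} : Set (ℕ → ι × ℤ) :=
  {ω | (∀ M : ℤ, ∃ᶠ n in atTop, (ω n).2 < M) ∧ ∀ M : ℤ, ∃ᶠ n in atTop, M < (ω n).2}

/-- `‖f_{iℓ}‖ = max_α P_{αi}(τ_ℓ < ∞)`. -/
noncomputable def fnorm {ι : Type*} [Fintype ι] [MeasurableSpace ι]
    (μ : ι → ℤ → Measure (ℕ → ι × ℤ)) (i ℓ : ℤ) : ℝ :=
  ⨆ α : ι, (μ α i (hitEvent ℓ)).toReal

/-- One step of the chain `(G_n, X_n)` has positive probability (the probabilities `p` being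
in `(0,1)`, this only depends on `Q`). -/
def StepPos {ι : Type*} (Q : Matrix ι ι ℝ) (s s' : ι × ℤ) : Prop :=
  0 < Q s.1 s'.1 ∧ (s'.2 = s.2 + 1 ∨ s'.2 = s.2 - 1)

/-- Irreducibility of the Markov chain `(G_n, X_n)`. -/
def ChainIrreducible {ι : Type*} (Q : Matrix ι ι ℝ) : Prop :=
  ∀ s s' : ι × ℤ, ∃ (n : ℕ) (c : ℕ → ι × ℤ),
    c 0 = s ∧ c n = s' ∧ ∀ k < n, StepPos Q (c k) (c (k + 1))

/-- Irreducibility of the Markov chain `G_n` with transition matrix `Q`. -/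
def MatIrreducible {ι : Type*} (Q : Matrix ι ι ℝ) : Prop :=
  ∀ α β : ι, ∃ (n : ℕ) (g : ℕ → ι), g 0 = α ∧ g n = β ∧ ∀ k < n, 0 < Q (g k) (g (k + 1))

/-- One-step transition probability of a nearest-neighbour random walk on `ℤ`. -/
noncomputable def stepRW (p : ℤ → ℝ) (i j : ℤ) : ℝ :=
  if j = i + 1 then p i else if j = i - 1 then 1 - p i else 0

/-- `μ i` is the quenched law of the nearest-neighbour walk on `ℤ` started at `i`. -/
def IsRWLaw (p : ℤ → ℝ) (μ : ℤ → Measure (ℕ → ℤ)) : Prop :=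
  ∀ i : ℤ,
    IsProbabilityMeasure (μ i) ∧
    ∀ (n : ℕ) (traj : ℕ → ℤ),
      μ i {ω | ∀ k ≤ n, ω k = traj k} =
        (if traj 0 = i then 1 else 0) *
          ENNReal.ofReal (∏ k ∈ Finset.range n, stepRW p (traj k) (traj (k + 1)))

def driftTopZ : Set (ℕ → ℤ) := {ω | Tendsto ω atTop atTop}

def driftBotZ : Set (ℕ → ℤ) := {ω | Tendsto ω atTop atBot}

def oscillateZ : Set (ℕ → ℤ) :=
  {ω | (∀ M : ℤ, ∃ᶠ n in atTop, ω n < M) ∧ ∀ M : ℤ, ∃ᶠ n in atTop, M < ω n}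

/-- A norm on matrices (all norms being equivalent, the choice is irrelevant). -/
noncomputable def matNorm {ι : Type*} [Fintype ι] (B : Matrix ι ι ℝ) : ℝ :=
  ⨆ x : ι × ι, |B x.1 x.2|

/-- `prodA A n = A_n ⋯ A_1`. -/
def prodA {ι : Type*} [Fintype ι] [DecidableEq ι]
    (A : ℤ → Matrix ι ι ℝ) : ℕ → Matrix ι ι ℝ
  | 0 => 1
  | n + 1 => A ((n : ℤ) + 1) * prodA A n

/-- The Lyapunov exponent `lim_n n⁻¹ log ‖B_n v‖` (as a `limsup`, in `EReal`). -/
noncomputable def lyap {ι : Type*} [Fintype ι] (B : ℕ → Matrix ι ι ℝ) (v : ι → ℝ) : EReal :=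
  Filter.limsup (fun n : ℕ => ((Real.log ‖B n *ᵥ v‖ / n : ℝ) : EReal)) Filter.atTop

/-- `V̄_0 = {v : lim_n n⁻¹ log ‖B_n v‖ ≤ 0}`. -/
def V0 {ι : Type*} [Fintype ι] (B : ℕ → Matrix ι ι ℝ) : Set (ι → ℝ) := {v | lyap B v ≤ 0}

/-- `V̄_{0-} = {v : lim_n n⁻¹ log ‖B_n v‖ < 0}`. -/
def V0minus {ι : Type*} [Fintype ι] (B : ℕ → Matrix ι ι ℝ) : Set (ι → ℝ) := {v | lyap B v < 0}

/-- `S` is a linear subspace of dimension `d`. -/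
def HasDim {ι : Type*} [Fintype ι] (S : Set (ι → ℝ)) (d : ℕ) : Prop :=
  ∃ W : Submodule ℝ (ι → ℝ), (W : Set (ι → ℝ)) = S ∧ Module.finrank ℝ W = d

/-- The `2m × 2m` matrix `A_i = [[M_i⁻¹, -σ_i],[I, 0]]` with `M_i = QΔ_i`, `N_i = Q(I - Δ_i)`,
`σ_i = M_i⁻¹ N_i`, where `p` lists the diagonal entries of `Δ_i`. -/
noncomputable def Afull {m : ℕ} (Q : Matrix (Fin m) (Fin m) ℝ) (p : Fin m → ℝ) :
    Matrix (Fin m ⊕ Fin m) (Fin m ⊕ Fin m) ℝ :=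
  Matrix.fromBlocks (Q * Matrix.diagonal p)⁻¹
    (-((Q * Matrix.diagonal p)⁻¹ * (Q * (1 - Matrix.diagonal p)))) 1 0

/-- `M̌_i = π⁽¹⁾Δ_i⁽¹⁾ + π⁽²⁾Δ_i⁽²⁾Θ`. -/
noncomputable def Mcheck {r s : ℕ} (π : Matrix (Fin r) (Fin r ⊕ Fin s) ℝ)
    (Θ : Matrix (Fin s) (Fin r) ℝ) (p : Fin r ⊕ Fin s → ℝ) : Matrix (Fin r) (Fin r) ℝ :=
  (Matrix.of fun a c => π a (Sum.inl c)) * Matrix.diagonal (fun c => p (Sum.inl c)) +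
    (Matrix.of fun a b => π a (Sum.inr b)) * Matrix.diagonal (fun b => p (Sum.inr b)) * Θ

/-- `Ň_i = π⁽¹⁾(I - Δ_i⁽¹⁾) + π⁽²⁾(I - Δ_i⁽²⁾)Θ`. -/
noncomputable def Ncheck {r s : ℕ} (π : Matrix (Fin r) (Fin r ⊕ Fin s) ℝ)
    (Θ : Matrix (Fin s) (Fin r) ℝ) (p : Fin r ⊕ Fin s → ℝ) : Matrix (Fin r) (Fin r) ℝ :=
  (Matrix.of fun a c => π a (Sum.inl c)) * (1 - Matrix.diagonal (fun c => p (Sum.inl c))) +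
    (Matrix.of fun a b => π a (Sum.inr b)) * (1 - Matrix.diagonal (fun b => p (Sum.inr b))) * Θ

/-- The `2r × 2r` matrix `Ǎ_i = [[M̌_i⁻¹, -σ̌_i],[I, 0]]` with `σ̌_i = M̌_i⁻¹ Ň_i`. -/
noncomputable def Acheck {r s : ℕ} (π : Matrix (Fin r) (Fin r ⊕ Fin s) ℝ)
    (Θ : Matrix (Fin s) (Fin r) ℝ) (p : Fin r ⊕ Fin s → ℝ) :
    Matrix (Fin r ⊕ Fin r) (Fin r ⊕ Fin r) ℝ :=
  Matrix.fromBlocks (Mcheck π Θ p)⁻¹ (-((Mcheck π Θ p)⁻¹ * Ncheck π Θ p)) 1 0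

/-- The event `{𝒩_ℓ ≥ k} = {τ_ℓ^{(k)} < ∞}`: there are at least `k` visits of `X` to `ℓ`
(at times `≥ 1`). -/
def visitsAtLeast {ι : Type*} (ℓ : ℤ) (k : ℕ) : Set (ℕ → ι × ℤ) :=
  {ω | ∃ s : Fin k → ℕ, StrictMono s ∧ ∀ j, 1 ≤ s j ∧ (ω (s j)).2 = ℓ}

/-- The event `{τ_ℓ^{(k+1)} < ∞, G_{τ_ℓ^{(k+1)}} = β}`: the walk visits `ℓ` at least `k+1` times
and the regime at the `(k+1)`-th visit is `β`. -/
def kthVisitInRegime {ι : Type*} (ℓ : ℤ) (k : ℕ) (β : ι) : Set (ℕ → ι × ℤ) :=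
  {ω | ∃ s : Fin (k + 1) → ℕ, StrictMono s ∧ (∀ j, 1 ≤ s j ∧ (ω (s j)).2 = ℓ) ∧
    (ω (s (Fin.last k))).1 = β ∧
    ∀ n : ℕ, 1 ≤ n → n ≤ s (Fin.last k) → (ω n).2 = ℓ → ∃ j, s j = n}

/-- The shift on real sequences. -/
def shiftSeq : (ℕ → ℝ) → (ℕ → ℝ) := fun x n => x (n + 1)


/-! ### Auxiliary machinery for Statement 9 -/

section Stmt9Aux

/-- First visit of `X` to `ℓ` (among times `≥ 1`) happens at time `n`, in regime `β`. -/
def FH {ι : Type*} (ℓ : ℤ) (β : ι) (n : ℕ) : Set (ℕ → ι × ℤ) :=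
  {ω | (ω n).2 = ℓ ∧ (ω n).1 = β ∧ ∀ k, 1 ≤ k → k < n → (ω k).2 ≠ ℓ}

/-- Extension of a finite path to a full trajectory, with constant tail value `x`. -/
def extP {ι : Type*} (x : ι × ℤ) (n : ℕ) (d : Fin (n + 1) → ι × ℤ) : ℕ → ι × ℤ :=
  fun k => if hk : k < n + 1 then d ⟨k, hk⟩ else x

lemma extP_lt {ι : Type*} (x : ι × ℤ) (n : ℕ) (d : Fin (n + 1) → ι × ℤ) {k : ℕ}
    (hk : k < n + 1) : extP x n d k = d ⟨k, hk⟩ := dif_pos hk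

lemma extP_ge {ι : Type*} (x : ι × ℤ) (n : ℕ) (d : Fin (n + 1) → ι × ℤ) {k : ℕ}
    (hk : ¬ k < n + 1) : extP x n d k = x := dif_neg hk

lemma prod_extP_indep {ι : Type*} (Q : Matrix ι ι ℝ) (p : ι → ℤ → ℝ) (x y : ι × ℤ)
    (n : ℕ) (d : Fin (n + 1) → ι × ℤ) :
    ∏ k ∈ Finset.range n, step Q p (extP x n d k) (extP x n d (k + 1)) =
      ∏ k ∈ Finset.range n, step Q p (extP y n d k) (extP y n d (k + 1)) := by
  refine Finset.prod_congr rfl fun k hk => ?_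
  have h1 : k < n + 1 := by have := Finset.mem_range.1 hk; omega
  have h2 : k + 1 < n + 1 := by have := Finset.mem_range.1 hk; omega
  rw [extP_lt x n d h1, extP_lt x n d h2, extP_lt y n d h1, extP_lt y n d h2]

open Classical in
/-- The elementary cylinder of length `n+1` associated to a prefix `d` (with final value
`(δ, ℓ)`), cut down to prefixes avoiding level `ℓ` at times `1, …, n`. -/
noncomputable def cylSet {ι : Type*} (ℓ : ℤ) (δ : ι) (n : ℕ)
    (d : Fin (n + 1) → ι × ℤ) : Set (ℕ → ι × ℤ) :=
  if (∀ k : Fin (n + 1), 1 ≤ (k : ℕ) → (d k).2 ≠ ℓ)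
  then {ω | ∀ k ≤ n + 1, ω k = extP (δ, ℓ) n d k} else ∅

lemma measurableSet_cyl {ι : Type*} [MeasurableSpace ι] [MeasurableSingletonClass ι]
    (n : ℕ) (c : ℕ → ι × ℤ) : MeasurableSet {ω : ℕ → ι × ℤ | ∀ k ≤ n, ω k = c k} := by
  have h : {ω : ℕ → ι × ℤ | ∀ k ≤ n, ω k = c k}
      = ⋂ (k : ℕ) (_ : k ≤ n), (fun ω : ℕ → ι × ℤ => ω k) ⁻¹' {c k} := by
    ext ω; simp
  rw [h]
  exact MeasurableSet.iInter fun k => MeasurableSet.iInter fun _ =>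
    (measurable_pi_apply k) (measurableSet_singleton _)

lemma measurableSet_cylSet {ι : Type*} [MeasurableSpace ι] [MeasurableSingletonClass ι]
    (ℓ : ℤ) (δ : ι) (n : ℕ) (d : Fin (n + 1) → ι × ℤ) : MeasurableSet (cylSet ℓ δ n d) := by
  unfold cylSet
  split_ifs
  · exact measurableSet_cyl _ _
  · exact MeasurableSet.empty

lemma measurableSet_FH {ι : Type*} [MeasurableSpace ι] [MeasurableSingletonClass ι]
    (ℓ : ℤ) (β : ι) (n : ℕ) : MeasurableSet (FH ℓ β n) := by
  have h : FH (ι := ι) ℓ β n = ((fun ω : ℕ → ι × ℤ => ω n) ⁻¹' {(β, ℓ)}) ∩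
      ⋂ (k : ℕ) (_ : 1 ≤ k) (_ : k < n),
        (fun ω : ℕ → ι × ℤ => (ω k).2) ⁻¹' ({ℓ}ᶜ) := by
    ext ω
    simp only [FH, Set.mem_setOf_eq, Set.mem_inter_iff, Set.mem_preimage,
      Set.mem_singleton_iff, Set.mem_iInter, Set.mem_compl_iff, Prod.ext_iff]
    tauto
  rw [h]
  exact ((measurable_pi_apply n) (measurableSet_singleton _)).inter
    (MeasurableSet.iInter fun k => MeasurableSet.iInter fun _ => MeasurableSet.iInter fun _ =>
      (measurable_snd.comp (measurable_pi_apply k)) (measurableSet_singleton ℓ).compl)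

lemma hitRegime_eq_iUnion {ι : Type*} (ℓ : ℤ) (β : ι) :
    hitRegimeEvent ℓ β = ⋃ n : ℕ, FH ℓ β (n + 1) := by
  ext ω
  constructor
  · rintro ⟨n, hn, h1, h2, h3⟩
    refine Set.mem_iUnion.2 ⟨n - 1, ?_⟩
    have hn' : n - 1 + 1 = n := by omega
    rw [hn']
    exact ⟨h1, h2, h3⟩
  · intro h
    obtain ⟨n, h1, h2, h3⟩ := Set.mem_iUnion.1 h
    exact ⟨n + 1, by omega, h1, h2, h3⟩

lemma hitEvent_eq_iUnion {ι : Type*} (ℓ : ℤ) :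
    hitEvent (ι := ι) ℓ = ⋃ q : ℕ × ι, FH ℓ q.2 (q.1 + 1) := by
  classical
  ext ω
  constructor
  · rintro ⟨n, hn, hωn⟩
    have hex : ∃ n : ℕ, 1 ≤ n ∧ (ω n).2 = ℓ := ⟨n, hn, hωn⟩
    obtain ⟨hN1, hNℓ⟩ := Nat.find_spec hex
    refine Set.mem_iUnion.2 ⟨(Nat.find hex - 1, (ω (Nat.find hex)).1), ?_⟩
    have hN : Nat.find hex - 1 + 1 = Nat.find hex := by omega
    refine ⟨by rw [hN]; exact hNℓ, by rw [hN], fun k hk1 hk2 h => ?_⟩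
    rw [hN] at hk2
    exact Nat.find_min hex hk2 ⟨hk1, h⟩
  · intro h
    obtain ⟨q, h1, _, _⟩ := Set.mem_iUnion.1 h
    exact ⟨q.1 + 1, by omega, h1⟩

lemma FH_pairwise {ι : Type*} (ℓ : ℤ) :
    Pairwise (Function.onFun Disjoint fun q : ℕ × ι => FH ℓ q.2 (q.1 + 1)) := by
  intro q q' hne
  rw [Function.onFun, Set.disjoint_left]
  intro ω h h'
  rcases lt_trichotomy q.1 q'.1 with hlt | heq | hlt
  · exact h'.2.2 (q.1 + 1) (by omega) (by omega) h.1
  · refine hne (Prod.ext heq ?_)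
    rw [← h.2.1, ← h'.2.1, heq]
  · exact h.2.2 (q'.1 + 1) (by omega) (by omega) h'.1

lemma FH_pairwise' {ι : Type*} (ℓ : ℤ) (β : ι) :
    Pairwise (Function.onFun Disjoint fun n : ℕ => FH ℓ β (n + 1)) := by
  intro n n' hne
  exact FH_pairwise (ι := ι) ℓ (show ((n, β) : ℕ × ι) ≠ (n', β) from
    fun h => hne (congrArg Prod.fst h))

lemma FH_eq_iUnion_cylSet {ι : Type*} (ℓ : ℤ) (δ : ι) (n : ℕ) :
    FH ℓ δ (n + 1) = ⋃ d : Fin (n + 1) → ι × ℤ, cylSet ℓ δ n d := by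
  classical
  ext ω
  simp only [Set.mem_iUnion]
  constructor
  · rintro ⟨h1, h2, h3⟩
    refine ⟨fun k => ω k, ?_⟩
    have hDh : ∀ k : Fin (n + 1), 1 ≤ (k : ℕ) → (ω (k : ℕ)).2 ≠ ℓ :=
      fun k hk => h3 k hk k.isLt
    rw [cylSet, if_pos hDh]
    intro k hk
    by_cases hk' : k < n + 1
    · rw [extP_lt _ _ _ hk']
    · have hkk : k = n + 1 := by omega
      subst hkk
      rw [extP_ge _ _ _ hk']
      exact Prod.ext h2 h1
  · rintro ⟨d, hd⟩
    rw [cylSet] at hd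
    split_ifs at hd with hD
    · have hωtop : ω (n + 1) = (δ, ℓ) := by
        have h := hd (n + 1) le_rfl
        rwa [extP_ge _ _ _ (by omega)] at h
      refine ⟨by rw [hωtop], by rw [hωtop], fun k hk1 hk2 => ?_⟩
      have hk' : k < n + 1 := hk2
      have h := hd k (by omega)
      rw [extP_lt _ _ _ hk'] at h
      rw [h]
      exact hD ⟨k, hk'⟩ hk1
    · exact absurd hd (Set.notMem_empty ω)

lemma cylSet_pairwise {ι : Type*} (ℓ : ℤ) (δ : ι) (n : ℕ) :
    Pairwise (Function.onFun Disjoint fun d : Fin (n + 1) → ι × ℤ => cylSet ℓ δ n d) := by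
  classical
  intro d d' hne
  rw [Function.onFun, Set.disjoint_left]
  intro ω h h'
  rw [cylSet] at h h'
  by_cases hD : ∀ k : Fin (n + 1), 1 ≤ (k : ℕ) → (d k).2 ≠ ℓ
  swap
  · rw [if_neg hD] at h; exact absurd h (Set.notMem_empty ω)
  by_cases hD' : ∀ k : Fin (n + 1), 1 ≤ (k : ℕ) → (d' k).2 ≠ ℓ
  swap
  · rw [if_neg hD'] at h'; exact absurd h' (Set.notMem_empty ω)
  rw [if_pos hD] at h
  rw [if_pos hD'] at h'
  obtain ⟨k0, hk0⟩ := Function.ne_iff.1 hne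
  apply hk0
  have e1 := h k0 k0.isLt.le
  have e2 := h' k0 k0.isLt.le
  rw [extP_lt _ _ _ k0.isLt] at e1 e2
  rw [Fin.eta] at e1 e2
  exact e1.symm.trans e2

lemma step_nonneg {ι : Type*} {Q : Matrix ι ι ℝ} {p : ι → ℤ → ℝ}
    (hQ : ∀ a b, 0 ≤ Q a b) (hp : ∀ a k, 0 ≤ p a k ∧ p a k ≤ 1) (s s' : ι × ℤ) :
    0 ≤ step Q p s s' := by
  unfold step
  refine mul_nonneg (hQ _ _) ?_
  split_ifs
  · exact (hp _ _).1
  · linarith [(hp s'.1 s.2).2]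
  · exact le_refl 0

lemma step_ne_zero_neighbors {ι : Type*} {Q : Matrix ι ι ℝ} {p : ι → ℤ → ℝ}
    {s s' : ι × ℤ} (h : step Q p s s' ≠ 0) : s'.2 = s.2 + 1 ∨ s'.2 = s.2 - 1 := by
  unfold step at h
  split_ifs at h with h1 h2
  · exact Or.inl h1
  · exact Or.inr h2
  · simp at h

open Classical in
/-- The weight of a prefix contributing to the first-visit decomposition. -/
noncomputable def hfunP {m : ℕ} (Q : Matrix (Fin m) (Fin m) ℝ) (p : Fin m → ℤ → ℝ)
    (α : Fin m) (i ℓ j : ℤ) (β : Fin m) (n : ℕ) (d : Fin (n + 1) → Fin m × ℤ) : ℝ≥0∞ :=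
  if (∀ k : Fin (n + 1), 1 ≤ (k : ℕ) → (d k).2 ≠ ℓ) ∧ d 0 = (α, i) ∧ (d (Fin.last n)).2 = j
  then ENNReal.ofReal (∏ k ∈ Finset.range n,
    step Q p (extP (β, ℓ) n d k) (extP (β, ℓ) n d (k + 1)))
  else 0

end Stmt9Aux

lemma step_mk {ι : Type*} (Q : Matrix ι ι ℝ) (p : ι → ℤ → ℝ) (a b : ι) (x y : ℤ) :
    step Q p (a, x) (b, y) =
      Q a b * (if y = x + 1 then p b x else if y = x - 1 then 1 - p b x else 0) := rfl

/-- Core computation: the conditional regime distribution at the first visit, given an abstract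
description `w` of the last-step weights. -/
theorem core_regime {m : ℕ}
    (π : Fin m → ℝ) (hπpos : ∀ γ, 0 < π γ)
    (Q : Matrix (Fin m) (Fin m) ℝ) (hQ : ∀ a b, Q a b = π b)
    (p : Fin m → ℤ → ℝ) (hp : ∀ a k, p a k ∈ Set.Ioo (0 : ℝ) 1)
    (μ : Fin m → ℤ → Measure (ℕ → Fin m × ℤ)) (hμ : IsQuenchedLaw Q p μ)
    (α β : Fin m) (ℓ i j : ℤ)
    (w : Fin m → ℝ) (hw0 : ∀ γ, 0 ≤ w γ)
    (hlast : ∀ γ δ : Fin m, step Q p (γ, j) (δ, ℓ) = π δ * w δ)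
    (hb : 0 < ∑ γ, π γ * w γ)
    (hpath : ∀ (n : ℕ) (d : ℕ → Fin m × ℤ) (δ : Fin m), d 0 = (α, i) →
      (∀ k, 1 ≤ k → k ≤ n → (d k).2 ≠ ℓ) →
      (∏ k ∈ Finset.range n, step Q p (d k) (d (k + 1))) ≠ 0 →
      step Q p (d n) (δ, ℓ) ≠ 0 → (d n).2 = j)
    (hpos : μ α i (hitEvent ℓ) ≠ 0) :
    μ α i (hitRegimeEvent ℓ β ∩ hitEvent ℓ) / μ α i (hitEvent ℓ) =
      ENNReal.ofReal (π β * w β / ∑ γ, π γ * w γ) := by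
  classical
  obtain ⟨hprob, hcyl⟩ := hμ α i
  haveI := hprob
  have hQ0 : ∀ a b, 0 ≤ Q a b := fun a b => (hQ a b) ▸ (hπpos b).le
  have hp01 : ∀ a k, 0 ≤ p a k ∧ p a k ≤ 1 := fun a k => ⟨(hp a k).1.le, (hp a k).2.le⟩
  have hsub : hitRegimeEvent ℓ β ∩ hitEvent ℓ = hitRegimeEvent (ι := Fin m) ℓ β := by
    refine Set.inter_eq_left.2 ?_
    rintro ω ⟨nn, h1, h2, _⟩
    exact ⟨nn, h1, h2⟩
  -- the measure of each first-visit slice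
  have key : ∀ (n : ℕ) (δ : Fin m),
      μ α i (FH ℓ δ (n + 1)) = ENNReal.ofReal (π δ * w δ) *
        ∑' d : Fin (n + 1) → Fin m × ℤ, hfunP Q p α i ℓ j β n d := by
    intro n δ
    have hperd : ∀ d : Fin (n + 1) → Fin m × ℤ,
        μ α i (cylSet ℓ δ n d) =
          ENNReal.ofReal (π δ * w δ) * hfunP Q p α i ℓ j β n d := by
      intro d
      have hext0 : extP (δ, ℓ) n d 0 = d 0 := by
        rw [extP_lt _ _ _ (Nat.succ_pos n)]
        congr 1
      have hextn : extP (δ, ℓ) n d n = d (Fin.last n) := by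
        rw [extP_lt _ _ _ (by omega : n < n + 1)]
        congr 1
      have hextn1 : extP (δ, ℓ) n d (n + 1) = (δ, ℓ) := extP_ge _ _ _ (by omega)
      rw [cylSet, hfunP]
      split_ifs with hD hfull hfull
      · -- avoidance holds, full condition holds
        obtain ⟨hD2, h0, hjlast⟩ := hfull
        rw [hcyl (n + 1) (extP (δ, ℓ) n d), if_pos (by rw [hext0, h0]),
          Finset.prod_range_succ, hextn, hextn1]
        have hstep : step Q p (d (Fin.last n)) (δ, ℓ) = π δ * w δ := by
          have hdl : d (Fin.last n) = ((d (Fin.last n)).1, j) := Prod.ext rfl hjlast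
          rw [hdl, hlast]
        rw [hstep, one_mul, prod_extP_indep Q p (δ, ℓ) (β, ℓ) n d,
          mul_comm _ (π δ * w δ),
          ENNReal.ofReal_mul (mul_nonneg (hπpos δ).le (hw0 δ))]
      · -- avoidance holds, full condition fails
        rw [mul_zero]
        rw [hcyl (n + 1) (extP (δ, ℓ) n d)]
        rcases Classical.em (d 0 = (α, i)) with h0 | h0
        · have hjne : (d (Fin.last n)).2 ≠ j := by
            intro hj'
            exact hfull ⟨hD, h0, hj'⟩
          by_cases hW : (∏ k ∈ Finset.range n,
              step Q p (extP (δ, ℓ) n d k) (extP (δ, ℓ) n d (k + 1))) = 0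
          · rw [Finset.prod_range_succ, hW, zero_mul, ENNReal.ofReal_zero, mul_zero]
          · have hstep0 : step Q p (extP (δ, ℓ) n d n) (δ, ℓ) = 0 := by
              by_contra hne0
              refine hjne ?_
              rw [← hextn]
              refine hpath n (extP (δ, ℓ) n d) δ (by rw [hext0, h0]) ?_ hW hne0
              intro k hk1 hk2
              rw [extP_lt _ _ _ (by omega : k < n + 1)]
              exact hD ⟨k, by omega⟩ hk1
            rw [Finset.prod_range_succ, hextn1, hstep0, mul_zero,
              ENNReal.ofReal_zero, mul_zero]
        · rw [if_neg (by rw [hext0]; exact h0), zero_mul]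
      · exact absurd hfull.1 hD
      · simp
    rw [FH_eq_iUnion_cylSet,
      measure_iUnion (cylSet_pairwise ℓ δ n) (fun d => measurableSet_cylSet ℓ δ n d),
      tsum_congr hperd, ENNReal.tsum_mul_left]
  -- total masses
  have hregime : ∀ δ : Fin m, μ α i (hitRegimeEvent ℓ δ) =
      ENNReal.ofReal (π δ * w δ) *
        ∑' n : ℕ, ∑' d : Fin (n + 1) → Fin m × ℤ, hfunP Q p α i ℓ j β n d := by
    intro δ
    rw [hitRegime_eq_iUnion,
      measure_iUnion (FH_pairwise' ℓ δ) (fun n => measurableSet_FH ℓ δ (n + 1)),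
      tsum_congr (fun n => key n δ), ENNReal.tsum_mul_left]
  have hhit : μ α i (hitEvent ℓ) =
      ENNReal.ofReal (∑ γ, π γ * w γ) *
        ∑' n : ℕ, ∑' d : Fin (n + 1) → Fin m × ℤ, hfunP Q p α i ℓ j β n d := by
    rw [hitEvent_eq_iUnion,
      measure_iUnion (FH_pairwise ℓ) (fun q => measurableSet_FH ℓ q.2 (q.1 + 1)),
      show (∑' q : ℕ × Fin m, μ α i (FH ℓ q.2 (q.1 + 1))) =
        ∑' (n : ℕ) (δ : Fin m), μ α i (FH ℓ δ (n + 1)) from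
        ENNReal.tsum_prod (f := fun n δ => μ α i (FH ℓ δ (n + 1)))]
    calc ∑' (n : ℕ) (δ : Fin m), μ α i (FH ℓ δ (n + 1))
        = ∑' n : ℕ, ∑ δ : Fin m, (ENNReal.ofReal (π δ * w δ) *
            ∑' d : Fin (n + 1) → Fin m × ℤ, hfunP Q p α i ℓ j β n d) := by
          refine tsum_congr fun n => ?_
          rw [tsum_fintype]
          exact Finset.sum_congr rfl fun δ _ => key n δ
      _ = ∑' n : ℕ, (∑ δ : Fin m, ENNReal.ofReal (π δ * w δ)) *
            ∑' d : Fin (n + 1) → Fin m × ℤ, hfunP Q p α i ℓ j β n d := by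
          refine tsum_congr fun n => ?_
          rw [Finset.sum_mul]
      _ = (∑ δ : Fin m, ENNReal.ofReal (π δ * w δ)) *
            ∑' (n : ℕ) (d : Fin (n + 1) → Fin m × ℤ), hfunP Q p α i ℓ j β n d :=
          ENNReal.tsum_mul_left
      _ = ENNReal.ofReal (∑ γ, π γ * w γ) *
            ∑' (n : ℕ) (d : Fin (n + 1) → Fin m × ℤ), hfunP Q p α i ℓ j β n d := by
          rw [ENNReal.ofReal_sum_of_nonneg
            (fun γ _ => mul_nonneg (hπpos γ).le (hw0 γ))]
  set T := ∑' (n : ℕ) (d : Fin (n + 1) → Fin m × ℤ), hfunP Q p α i ℓ j β n d with hT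
  have hbne : ENNReal.ofReal (∑ γ, π γ * w γ) ≠ 0 := (ENNReal.ofReal_pos.2 hb).ne'
  have hTne : T ≠ 0 := by
    intro h
    rw [hhit, h, mul_zero] at hpos
    exact hpos rfl
  have hTtop : T ≠ ⊤ := by
    intro h
    have h1 : μ α i (hitEvent ℓ) = ⊤ := by
      rw [hhit, h, ENNReal.mul_top hbne]
    exact (measure_ne_top (μ α i) _) h1
  rw [hsub, hregime β, hhit, ENNReal.mul_div_mul_right _ _ hTne hTtop,
    ENNReal.ofReal_div_of_pos hb]

/-- Positivity of the hitting probability. -/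
theorem hit_pos {m : ℕ}
    (π : Fin m → ℝ) (hπpos : ∀ γ, 0 < π γ)
    (Q : Matrix (Fin m) (Fin m) ℝ) (hQ : ∀ a b, Q a b = π b)
    (p : Fin m → ℤ → ℝ) (hp : ∀ a k, p a k ∈ Set.Ioo (0 : ℝ) 1)
    (μ : Fin m → ℤ → Measure (ℕ → Fin m × ℤ)) (hμ : IsQuenchedLaw Q p μ)
    (α : Fin m) (ℓ i : ℤ) (hne : i ≠ ℓ) :
    μ α i (hitEvent ℓ) ≠ 0 := by
  classical
  obtain ⟨hprob, hcyl⟩ := hμ α i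
  rcases hne.lt_or_gt with hlt | hlt
  · -- i < ℓ : walk up
    set N := (ℓ - i).toNat with hNdef
    have hN : (N : ℤ) = ℓ - i := Int.toNat_of_nonneg (by omega)
    have hN1 : 1 ≤ N := by omega
    set traj : ℕ → Fin m × ℤ := fun k => (α, i + k) with htraj
    have hsubset : {ω : ℕ → Fin m × ℤ | ∀ k ≤ N, ω k = traj k} ⊆ hitEvent ℓ := by
      intro ω hω
      refine ⟨N, hN1, ?_⟩
      rw [hω N le_rfl]
      show i + (N : ℤ) = ℓ
      omega
    have hprod : 0 < ∏ k ∈ Finset.range N, step Q p (traj k) (traj (k + 1)) := by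
      refine Finset.prod_pos fun k _ => ?_
      show 0 < step Q p (α, i + k) (α, i + (k + 1 : ℕ))
      unfold step
      rw [hQ]
      rw [if_pos (by push_cast; ring)]
      exact mul_pos (hπpos α) (hp α _).1
    intro h0
    have hle : μ α i {ω : ℕ → Fin m × ℤ | ∀ k ≤ N, ω k = traj k} = 0 :=
      le_antisymm (h0 ▸ measure_mono hsubset) zero_le
    rw [hcyl N traj, if_pos (by show (α, i + (0:ℕ)) = (α, i); norm_num)] at hle
    rw [one_mul] at hle
    exact (ENNReal.ofReal_pos.2 hprod).ne' hle
  · -- ℓ < i : walk down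
    set N := (i - ℓ).toNat with hNdef
    have hN : (N : ℤ) = i - ℓ := Int.toNat_of_nonneg (by omega)
    have hN1 : 1 ≤ N := by omega
    set traj : ℕ → Fin m × ℤ := fun k => (α, i - k) with htraj
    have hsubset : {ω : ℕ → Fin m × ℤ | ∀ k ≤ N, ω k = traj k} ⊆ hitEvent ℓ := by
      intro ω hω
      refine ⟨N, hN1, ?_⟩
      rw [hω N le_rfl]
      show i - (N : ℤ) = ℓ
      omega
    have hprod : 0 < ∏ k ∈ Finset.range N, step Q p (traj k) (traj (k + 1)) := by
      refine Finset.prod_pos fun k _ => ?_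
      show 0 < step Q p (α, i - k) (α, i - (k + 1 : ℕ))
      unfold step
      rw [hQ]
      rw [if_neg (by push_cast; omega), if_pos (by push_cast; ring)]
      have := hp α (i - k)
      exact mul_pos (hπpos α) (by linarith [(hp α (i - (k:ℤ))).2])
    intro h0
    have hle : μ α i {ω : ℕ → Fin m × ℤ | ∀ k ≤ N, ω k = traj k} = 0 :=
      le_antisymm (h0 ▸ measure_mono hsubset) zero_le
    rw [hcyl N traj, if_pos (by show (α, i - (0:ℕ)) = (α, i); norm_num)] at hle
    rw [one_mul] at hle
    exact (ENNReal.ofReal_pos.2 hprod).ne' hle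

/-! ### Statement 9: regime distribution at the hitting time (rank-1 case) -/

theorem stmt9_hitting_regime_rank1 {m : ℕ} (hm : 0 < m)
    (π : Fin m → ℝ) (hπpos : ∀ β, 0 < π β) (hπsum : ∑ β, π β = 1)
    (Q : Matrix (Fin m) (Fin m) ℝ) (hQ : ∀ α β, Q α β = π β)
    (p : Fin m → ℤ → ℝ) (hp : ∀ α k, p α k ∈ Set.Ioo (0 : ℝ) 1)
    (μ : Fin m → ℤ → Measure (ℕ → Fin m × ℤ)) (hμ : IsQuenchedLaw Q p μ)
    (pb : ℤ → ℝ) (hpb : ∀ i, pb i = ∑ β, π β * p β i) :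
    ∀ (β α : Fin m) (ℓ i : ℤ), i ≠ ℓ →
      (ℓ < i →
        μ α i (hitRegimeEvent ℓ β ∩ hitEvent ℓ) / μ α i (hitEvent ℓ) =
          ENNReal.ofReal (π β * (1 - p β (ℓ + 1)) / (1 - pb (ℓ + 1)))) ∧
      (i < ℓ →
        μ α i (hitRegimeEvent ℓ β ∩ hitEvent ℓ) / μ α i (hitEvent ℓ) =
          ENNReal.ofReal (π β * p β (ℓ - 1) / pb (ℓ - 1))) := by
  intro β α ℓ i hne
  haveI : Nonempty (Fin m) := ⟨⟨0, hm⟩⟩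
  have hpos := hit_pos π hπpos Q hQ p hp μ hμ α ℓ i hne
  constructor
  · -- ℓ < i : the walk approaches ℓ from above, last step is a down-step from ℓ+1
    intro hlt
    have hsum : ∑ γ, π γ * (1 - p γ (ℓ + 1)) = 1 - pb (ℓ + 1) := by
      have hstep : ∑ γ, π γ * (1 - p γ (ℓ + 1)) = (∑ γ, π γ) - ∑ γ, π γ * p γ (ℓ + 1) := by
        rw [← Finset.sum_sub_distrib]
        exact Finset.sum_congr rfl fun γ _ => by ring
      rw [hstep, hπsum, hpb]
    have hb : 0 < ∑ γ, π γ * (1 - p γ (ℓ + 1)) := by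
      rw [hsum]
      have hlt1 : pb (ℓ + 1) < 1 := by
        rw [hpb, ← hπsum]
        exact Finset.sum_lt_sum_of_nonempty Finset.univ_nonempty fun γ _ =>
          mul_lt_of_lt_one_right (hπpos γ) (hp γ (ℓ + 1)).2
      linarith
    have hlast : ∀ γ δ : Fin m, step Q p (γ, ℓ + 1) (δ, ℓ) = π δ * (1 - p δ (ℓ + 1)) := by
      intro γ δ
      rw [step_mk, if_neg (by omega), if_pos (by omega), hQ]
    have habove : ∀ (n : ℕ) (d : ℕ → Fin m × ℤ), d 0 = (α, i) →
        (∀ k, 1 ≤ k → k ≤ n → (d k).2 ≠ ℓ) →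
        (∏ k ∈ Finset.range n, step Q p (d k) (d (k + 1))) ≠ 0 → ℓ < (d n).2 := by
      intro n
      induction n with
      | zero => intro d h0 _ _; rw [h0]; exact hlt
      | succ n ih =>
        intro d h0 havoid hprod
        rw [Finset.prod_range_succ] at hprod
        have h1 : (∏ k ∈ Finset.range n, step Q p (d k) (d (k + 1))) ≠ 0 :=
          fun h => hprod (by rw [h, zero_mul])
        have h2 : step Q p (d n) (d (n + 1)) ≠ 0 := fun h => hprod (by rw [h, mul_zero])
        have h3 := ih d h0 (fun k hk1 hk2 => havoid k hk1 (by omega)) h1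
        have h4 : (d (n + 1)).2 ≠ ℓ := havoid (n + 1) (by omega) le_rfl
        rcases step_ne_zero_neighbors h2 with h | h <;> omega
    have hpath : ∀ (n : ℕ) (d : ℕ → Fin m × ℤ) (δ : Fin m), d 0 = (α, i) →
        (∀ k, 1 ≤ k → k ≤ n → (d k).2 ≠ ℓ) →
        (∏ k ∈ Finset.range n, step Q p (d k) (d (k + 1))) ≠ 0 →
        step Q p (d n) (δ, ℓ) ≠ 0 → (d n).2 = ℓ + 1 := by
      intro n d δ h0 havoid hprod hstep
      have h3 := habove n d h0 havoid hprod
      rcases step_ne_zero_neighbors hstep with h | h <;> simp only [Prod.snd] at h <;> omega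
    have hcore := core_regime π hπpos Q hQ p hp μ hμ α β ℓ i (ℓ + 1)
      (fun γ => 1 - p γ (ℓ + 1)) (fun γ => by show (0:ℝ) ≤ 1 - p γ (ℓ + 1); linarith [(hp γ (ℓ + 1)).2]) hlast hb hpath hpos
    rw [hcore, hsum]
  · -- i < ℓ : the walk approaches ℓ from below, last step is an up-step from ℓ-1
    intro hlt
    have hsum : ∑ γ, π γ * p γ (ℓ - 1) = pb (ℓ - 1) := (hpb _).symm
    have hb : 0 < ∑ γ, π γ * p γ (ℓ - 1) :=
      Finset.sum_pos (fun γ _ => mul_pos (hπpos γ) (hp γ (ℓ - 1)).1) Finset.univ_nonempty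
    have hlast : ∀ γ δ : Fin m, step Q p (γ, ℓ - 1) (δ, ℓ) = π δ * p δ (ℓ - 1) := by
      intro γ δ
      rw [step_mk, if_pos (by omega), hQ]
    have hbelow : ∀ (n : ℕ) (d : ℕ → Fin m × ℤ), d 0 = (α, i) →
        (∀ k, 1 ≤ k → k ≤ n → (d k).2 ≠ ℓ) →
        (∏ k ∈ Finset.range n, step Q p (d k) (d (k + 1))) ≠ 0 → (d n).2 < ℓ := by
      intro n
      induction n with
      | zero => intro d h0 _ _; rw [h0]; exact hlt
      | succ n ih =>
        intro d h0 havoid hprod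
        rw [Finset.prod_range_succ] at hprod
        have h1 : (∏ k ∈ Finset.range n, step Q p (d k) (d (k + 1))) ≠ 0 :=
          fun h => hprod (by rw [h, zero_mul])
        have h2 : step Q p (d n) (d (n + 1)) ≠ 0 := fun h => hprod (by rw [h, mul_zero])
        have h3 := ih d h0 (fun k hk1 hk2 => havoid k hk1 (by omega)) h1
        have h4 : (d (n + 1)).2 ≠ ℓ := havoid (n + 1) (by omega) le_rfl
        rcases step_ne_zero_neighbors h2 with h | h <;> omega
    have hpath : ∀ (n : ℕ) (d : ℕ → Fin m × ℤ) (δ : Fin m), d 0 = (α, i) →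
        (∀ k, 1 ≤ k → k ≤ n → (d k).2 ≠ ℓ) →
        (∏ k ∈ Finset.range n, step Q p (d k) (d (k + 1))) ≠ 0 →
        step Q p (d n) (δ, ℓ) ≠ 0 → (d n).2 = ℓ - 1 := by
      intro n d δ h0 havoid hprod hstep
      have h3 := hbelow n d h0 havoid hprod
      rcases step_ne_zero_neighbors hstep with h | h <;> simp only [Prod.snd] at h <;> omega
    have hcore := core_regime π hπpos Q hQ p hp μ hμ α β ℓ i (ℓ - 1)
      (fun γ => p γ (ℓ - 1)) (fun γ => (hp γ (ℓ - 1)).1.le) hlast hb hpath hpos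
    rw [hcore, hsum]

end Parrondo
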